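/- Let h ≥ 1 be an integer, ε ∈ ℂ*, and γ : ℤ → ℂ with γ(n+2h+1) = ε·γ(n) for all n. Suppose X, Y : ℤ → ℂ* satisfy Y(n+1)·Y(n) = X(n) and X(n+2h)·X(n) = −(1/∏_{k=1}^{h−1} X(n+2k))·(1/∏_{k=0}^{h−1} X(n+2k+1) + γ(n)) for all n. Then u(l,m) := i/((∏_{k=1}^{h} X(l − (2h+1)m + 2k − 1))·Y(l − (2h+1)m)) satisfies ε·u(l+1,m+1) − u(l,m) = ε/u(l,m+1) − 1/u(l+1,m) for all l,m, and satisfies u(l+2h+1, m+1) = u(l,m). -/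

import Mathlib

theorem stmt_6 (h : ℕ) (hh : 1 ≤ h) (ε : ℂ) (hε : ε ≠ 0) (γ : ℤ → ℂ)
    (hγ : ∀ n : ℤ, γ (n + (2 * h + 1)) = ε * γ n)
    (X Y : ℤ → ℂ) (hX : ∀ n : ℤ, X n ≠ 0) (hY : ∀ n : ℤ, Y n ≠ 0)
    (hXY : ∀ n : ℤ, Y (n + 1) * Y n = X n)
    (hXeq : ∀ n : ℤ,
      X (n + 2 * h) * X n
        = -(1 / ∏ k ∈ Finset.range (h - 1), X (n + 2 * (k + 1)))
            * (1 / (∏ k ∈ Finset.range h, X (n + 2 * k + 1)) + γ n))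
    (u : ℤ × ℤ → ℂ)
    (hu : ∀ l m : ℤ,
      u (l, m) = Complex.I /
        ((∏ k ∈ Finset.range h, X (l - (2 * h + 1) * m + 2 * (k + 1) - 1))
          * Y (l - (2 * h + 1) * m))) :
    (∀ l m : ℤ,
      ε * u (l + 1, m + 1) - u (l, m) = ε / u (l, m + 1) - 1 / u (l + 1, m)) ∧
    (∀ l m : ℤ, u (l + (2 * h + 1), m + 1) = u (l, m)) := by
  obtain ⟨h', rfl⟩ : ∃ h'', h = h'' + 1 := ⟨h - 1, by omega⟩
  obtain ⟨P, hPdef⟩ : ∃ P : ℤ → ℂ,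
      ∀ n : ℤ, P n = ∏ k ∈ Finset.range (h' + 1), X (n + 2 * (k + 1) - 1) :=
    ⟨_, fun n => rfl⟩
  have hP0 : ∀ n : ℤ, P n ≠ 0 := by
    intro n; rw [hPdef]
    exact Finset.prod_ne_zero_iff.mpr fun k _ => hX _
  have hPalt : ∀ n : ℤ, P n = ∏ k ∈ Finset.range (h' + 1), X (n + 2 * k + 1) := by
    intro n; rw [hPdef]
    exact Finset.prod_congr rfl fun k _ => by congr 1; ring
  have hPsucc : ∀ n : ℤ, P (n + 1) = ∏ k ∈ Finset.range (h' + 1), X (n + 2 * k + 2) := by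
    intro n; rw [hPdef]
    exact Finset.prod_congr rfl fun k _ => by congr 1; ring
  -- Key identity 1 : 1 + P n * P (n+1) * (Y (n+1) * Y n) = -(γ n * P n)
  have key1 : ∀ n : ℤ, 1 + P n * P (n + 1) * (Y (n + 1) * Y n) = -(γ n * P n) := by
    intro n
    have hQ : (∏ k ∈ Finset.range h', X (n + 2 * (k + 1))) ≠ 0 :=
      Finset.prod_ne_zero_iff.mpr fun k _ => hX _
    have hx := hXeq n
    rw [Nat.add_sub_cancel, ← hPalt n] at hx
    push_cast at hx
    have e1 : P (n + 1)
        = (∏ k ∈ Finset.range h', X (n + 2 * (k + 1))) * X (n + 2 * ((h' : ℤ) + 1)) := by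
      rw [hPdef, Finset.prod_range_succ]
      congr 1
      · exact Finset.prod_congr rfl fun k _ => by congr 1; ring
      · congr 1; push_cast; ring
    have hx2 : (∏ k ∈ Finset.range h', X (n + 2 * (k + 1)))
        * (X (n + 2 * ((h' : ℤ) + 1)) * X n) * P n = -(1 + γ n * P n) := by
      field_simp [hQ, hP0 n] at hx
      linear_combination hx
    rw [hXY n, e1]
    linear_combination hx2
  -- Key identity 2 (telescoping with Y)
  have key2 : ∀ (m : ℕ) (n : ℤ),
      (∏ k ∈ Finset.range m, X (n + 2 * k + 1)) * Y (n + 2 * m + 1)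
        = (∏ k ∈ Finset.range m, X (n + 2 * k + 2)) * Y (n + 1) := by
    intro m
    induction m with
    | zero => intro n; norm_num
    | succ m ih =>
      intro n
      rw [Finset.prod_range_succ, Finset.prod_range_succ]
      have a1 := hXY (n + 2 * m + 1)
      rw [show (n + 2 * (m : ℤ) + 1) + 1 = n + 2 * m + 2 from by ring] at a1
      have a2 := hXY (n + 2 * m + 2)
      rw [show (n + 2 * (m : ℤ) + 2) + 1 = n + 2 * m + 3 from by ring] at a2
      push_cast
      rw [show n + 2 * ((m : ℤ) + 1) + 1 = n + 2 * m + 3 from by ring]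
      rw [← a1, ← a2]
      linear_combination (Y (n + 2 * m + 2) * Y (n + 2 * m + 3)) * ih n
  have hK2 : ∀ n : ℤ, P n * Y (n + 2 * h' + 3) = P (n + 1) * Y (n + 1) := by
    intro n
    have t := key2 (h' + 1) n
    rw [← hPalt n, ← hPsucc n,
      show n + 2 * ((h' + 1 : ℕ) : ℤ) + 1 = n + 2 * h' + 3 from by push_cast; ring] at t
    · exact t
  -- main pointwise identity
  have main : ∀ n : ℤ,
      ε * (Complex.I / (P (n - 2 * h' - 2) * Y (n - 2 * h' - 2)))
          - Complex.I / (P n * Y n)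
        = ε / (Complex.I / (P (n - 2 * h' - 3) * Y (n - 2 * h' - 3)))
          - 1 / (Complex.I / (P (n + 1) * Y (n + 1))) := by
    intro n
    have hPn := hP0 n
    have hYn := hY n
    have hPb := hP0 (n - 2 * h' - 2)
    have hYb := hY (n - 2 * h' - 2)
    have E1 : P (n + 1) * Y (n + 1) + 1 / (P n * Y n) = -(γ n) / Y n := by
      have f1 := key1 n
      field_simp
      linear_combination f1
    have f2 := key1 (n - 2 * h' - 3)
    rw [show n - 2 * (h' : ℤ) - 3 + 1 = n - 2 * h' - 2 from by ring] at f2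
    have g2 := hK2 (n - 2 * h' - 3)
    rw [show n - 2 * (h' : ℤ) - 3 + 2 * h' + 3 = n from by ring,
      show n - 2 * (h' : ℤ) - 3 + 1 = n - 2 * h' - 2 from by ring] at g2
    have E2 : P (n - 2 * h' - 3) * Y (n - 2 * h' - 3)
        + 1 / (P (n - 2 * h' - 2) * Y (n - 2 * h' - 2))
        = -(γ (n - 2 * h' - 3)) / Y n := by
      field_simp
      linear_combination Y n * f2 + (-(γ (n - 2 * h' - 3))) * g2
    have hgam := hγ (n - 2 * h' - 3)
    rw [show n - 2 * (h' : ℤ) - 3 + (2 * ((h' + 1 : ℕ) : ℤ) + 1) = n from by push_cast; ring]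
      at hgam
    have E3 : ε * (P (n - 2 * h' - 3) * Y (n - 2 * h' - 3)
          + 1 / (P (n - 2 * h' - 2) * Y (n - 2 * h' - 2)))
        = P (n + 1) * Y (n + 1) + 1 / (P n * Y n) := by
      rw [E1, E2, hgam]
      ring
    rw [div_div_eq_mul_div, Complex.div_I, one_div, inv_div, Complex.div_I]
    linear_combination Complex.I * E3
  constructor
  · intro l m
    have r1 := hu (l + 1) (m + 1)
    have r2 := hu l m
    have r3 := hu l (m + 1)
    have r4 := hu (l + 1) m
    rw [← hPdef (l + 1 - (2 * ((h' : ℕ) + 1 : ℕ) + 1) * (m + 1))] at r1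
    rw [← hPdef (l - (2 * ((h' : ℕ) + 1 : ℕ) + 1) * m)] at r2
    rw [← hPdef (l - (2 * ((h' : ℕ) + 1 : ℕ) + 1) * (m + 1))] at r3
    rw [← hPdef (l + 1 - (2 * ((h' : ℕ) + 1 : ℕ) + 1) * m)] at r4
    rw [r1, r2, r3, r4]
    rw [show l + 1 - (2 * ((h' : ℕ) + 1 : ℕ) + 1 : ℤ) * (m + 1)
        = (l - (2 * ((h' : ℕ) + 1 : ℕ) + 1 : ℤ) * m) - 2 * h' - 2 from by push_cast; ring,
      show l - (2 * ((h' : ℕ) + 1 : ℕ) + 1 : ℤ) * (m + 1)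
        = (l - (2 * ((h' : ℕ) + 1 : ℕ) + 1 : ℤ) * m) - 2 * h' - 3 from by push_cast; ring,
      show l + 1 - (2 * ((h' : ℕ) + 1 : ℕ) + 1 : ℤ) * m
        = (l - (2 * ((h' : ℕ) + 1 : ℕ) + 1 : ℤ) * m) + 1 from by ring]
    exact main _
  · intro l m
    rw [hu, hu,
      show l + (2 * ((h' : ℕ) + 1 : ℕ) + 1 : ℤ) - (2 * ((h' : ℕ) + 1 : ℕ) + 1 : ℤ) * (m + 1)
        = l - (2 * ((h' : ℕ) + 1 : ℕ) + 1 : ℤ) * m from by ring]
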